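/- Let f : ℝ^M → ℝ be C¹ satisfying the Lojasiewicz gradient inequality |f(w) - f(w*)|^α ≤ C‖∇f(w)‖ with α ∈ [1/2, 1) on a ball B around w*, with f(w*) = 0 and f ≥ 0 on B. If the gradient flow trajectory w(t) stays in B for all t ≥ 0, then the trajectory has finite length: ∫₀^∞ ‖w'(t)‖ dt ≤ (C/(1-α)) · f(w(0))^(1-α), and hence w(t) converges to a limit as t → ∞. -/

import Mathlib

open MeasureTheory

/-- Under a Lojasiewicz inequality, the gradient flow trajectory has finite length
bounded by `(C/(1-α)) f(w 0)^(1-α)`, and hence converges. -/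
theorem stmt3 {M : ℕ} (f : EuclideanSpace ℝ (Fin M) → ℝ)
    (wstar : EuclideanSpace ℝ (Fin M)) (α C r : ℝ)
    (hα : α ∈ Set.Ico (1 / 2 : ℝ) 1) (hC : 0 < C) (hr : 0 < r)
    (hf : ContDiff ℝ 1 f)
    (hfs : f wstar = 0)
    (hnn : ∀ v ∈ Metric.ball wstar r, 0 ≤ f v)
    (hLI : ∀ v ∈ Metric.ball wstar r,
      |f v - f wstar| ^ α ≤ C * ‖gradient f v‖)
    (w : ℝ → EuclideanSpace ℝ (Fin M))
    (hflow : ∀ t, 0 ≤ t → HasDerivAt w (-(gradient f (w t))) t)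
    (hball : ∀ t, 0 ≤ t → w t ∈ Metric.ball wstar r) :
    (∫ t in Set.Ioi (0 : ℝ), ‖deriv w t‖) ≤ (C / (1 - α)) * f (w 0) ^ (1 - α) ∧
      ∃ l, Filter.Tendsto w Filter.atTop (nhds l) := by
  obtain ⟨hα2, hα1⟩ := hα
  have h1α : (0:ℝ) < 1 - α := by linarith
  set c : ℝ := C / (1 - α) with hc
  have hc0 : 0 < c := div_pos hC h1α
  have hdiff : Differentiable ℝ f := hf.differentiable one_ne_zero
  have hgradcont : Continuous fun v => gradient f v := by
    have h1 : Continuous fun v => fderiv ℝ f v := hf.continuous_fderiv one_ne_zero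
    exact (InnerProductSpace.toDual ℝ _).symm.continuous.comp h1
  set G : ℝ → EuclideanSpace ℝ (Fin M) := fun t => gradient f (w t) with hGdef
  set g : ℝ → ℝ := fun t => f (w t) with hgdef
  have hwcon : ContinuousOn w (Set.Ici 0) := fun t ht =>
    ((hflow t ht).continuousAt).continuousWithinAt
  have hGcon : ContinuousOn G (Set.Ici 0) := hgradcont.comp_continuousOn hwcon
  have hNcon : ContinuousOn (fun t => ‖G t‖) (Set.Ici (0:ℝ)) := hGcon.norm
  have hg_cont : ContinuousOn g (Set.Ici 0) := hf.continuous.comp_continuousOn hwcon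
  have hg_nonneg : ∀ t, 0 ≤ t → 0 ≤ g t := fun t ht => hnn _ (hball t ht)
  have hg_deriv : ∀ t, 0 ≤ t → HasDerivAt g (-(‖G t‖ ^ 2)) t := by
    intro t ht
    have h1 : HasGradientAt f (G t) (w t) := (hdiff (w t)).hasGradientAt
    have h2 : HasFDerivAt f (InnerProductSpace.toDual ℝ _ (G t)) (w t) :=
      hasGradientAt_iff_hasFDerivAt.mp h1
    have h3 := h2.comp_hasDerivAt t (hflow t ht)
    refine HasDerivAt.congr_deriv h3 ?_
    simp only [InnerProductSpace.toDual_apply_apply, inner_neg_right,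
      real_inner_self_eq_norm_sq]
    rw [← real_inner_self_eq_norm_sq]
  have hLI' : ∀ t, 0 ≤ t → g t ^ α ≤ C * ‖G t‖ := by
    intro t ht
    have := hLI (w t) (hball t ht)
    rwa [hfs, sub_zero, abs_of_nonneg (hg_nonneg t ht)] at this
  have hg_anti : AntitoneOn g (Set.Ici 0) := by
    apply antitoneOn_of_deriv_nonpos (convex_Ici 0) hg_cont
    · intro t ht
      rw [interior_Ici] at ht
      exact ((hg_deriv t ht.le).differentiableAt).differentiableWithinAt
    · intro t ht
      rw [interior_Ici] at ht
      rw [(hg_deriv t ht.le).deriv]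
      simp [sq_nonneg]
  set K : ℝ := c * g 0 ^ (1 - α) with hK
  have hK0 : 0 ≤ K := mul_nonneg hc0.le (Real.rpow_nonneg (hg_nonneg 0 le_rfl) _)
  -- interval integrability of ‖G‖ on [0, i]
  have hGint : ∀ s t : ℝ, 0 ≤ s → s ≤ t →
      IntervalIntegrable (fun u => ‖G u‖) volume s t := by
    intro s t hs hst
    apply ContinuousOn.intervalIntegrable
    apply hNcon.mono
    rw [Set.uIcc_of_le hst]
    exact fun x hx => le_trans hs hx.1
  -- key estimate on intervals where g is positive
  have key : ∀ b : ℝ, 0 ≤ b → (∀ s, 0 ≤ s → s < b → 0 < g s) →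
      (∫ t in (0:ℝ)..b, ‖G t‖) ≤ K := by
    intro b hb hpos
    rcases eq_or_lt_of_le hb with rfl | hb0
    · simpa using hK0
    have inner : ∀ s, 0 ≤ s → s < b → (∫ t in (0:ℝ)..s, ‖G t‖) ≤ K := by
      intro s hs hsb
      set D : ℝ → ℝ := fun t => c * (-(‖G t‖ ^ 2) * (1 - α) * g t ^ (1 - α - 1)) with hD
      have hDderiv : ∀ t ∈ Set.uIcc (0:ℝ) s,
          HasDerivAt (fun u => c * g u ^ (1 - α)) (D t) t := by
        intro t ht
        rw [Set.uIcc_of_le hs] at ht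
        have hgt := hpos t ht.1 (lt_of_le_of_lt ht.2 hsb)
        exact ((hg_deriv t ht.1).rpow_const (Or.inl (ne_of_gt hgt))).const_mul c
      have hDcont : ContinuousOn D (Set.Icc 0 s) := by
        have h1 : ContinuousOn (fun t => g t ^ (1 - α - 1)) (Set.Icc 0 s) :=
          ContinuousOn.rpow_const (hg_cont.mono (fun x hx => hx.1))
            (fun t ht => Or.inl (ne_of_gt (hpos t ht.1 (lt_of_le_of_lt ht.2 hsb))))
        have h2 : ContinuousOn (fun t => ‖G t‖) (Set.Icc 0 s) := hNcon.mono (fun x hx => hx.1)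
        exact continuousOn_const.mul (((h2.pow 2).neg.mul continuousOn_const).mul h1)
      have hDint : IntervalIntegrable D volume 0 s := by
        apply ContinuousOn.intervalIntegrable
        rwa [Set.uIcc_of_le hs]
      have hftc : (∫ t in (0:ℝ)..s, D t) = c * g s ^ (1 - α) - c * g 0 ^ (1 - α) :=
        intervalIntegral.integral_eq_sub_of_hasDerivAt hDderiv hDint
      have hmono : (∫ t in (0:ℝ)..s, ‖G t‖) ≤ ∫ t in (0:ℝ)..s, -D t := by
        apply intervalIntegral.integral_mono_on hs (hGint 0 s le_rfl hs) hDint.neg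
        intro t ht
        show ‖G t‖ ≤ -D t
        have hgt := hpos t ht.1 (lt_of_le_of_lt ht.2 hsb)
        have hb1 : 0 < g t ^ (1 - α - 1) := Real.rpow_pos_of_pos hgt _
        have hab : g t ^ α * g t ^ (1 - α - 1) = 1 := by
          rw [← Real.rpow_add hgt]; norm_num
        have hli := hLI' t ht.1
        have hgoal : ‖G t‖ ≤ C * (g t ^ (1 - α - 1) * ‖G t‖ ^ 2) := by
          nlinarith [mul_le_mul_of_nonneg_left hli
            (mul_nonneg hb1.le (norm_nonneg (G t))), hab, norm_nonneg (G t)]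
        have heq : -D t = c * (1 - α) * (g t ^ (1 - α - 1) * ‖G t‖ ^ 2) := by
          simp only [hD]; ring
        have hcC : c * (1 - α) = C := div_mul_cancel₀ C (ne_of_gt h1α)
        rw [heq, hcC]
        exact hgoal
      have hs' : 0 ≤ c * g s ^ (1 - α) := mul_nonneg hc0.le (Real.rpow_nonneg (hg_nonneg s hs) _)
      calc (∫ t in (0:ℝ)..s, ‖G t‖) ≤ ∫ t in (0:ℝ)..s, -D t := hmono
        _ = -(∫ t in (0:ℝ)..s, D t) := intervalIntegral.integral_neg
        _ = c * g 0 ^ (1 - α) - c * g s ^ (1 - α) := by rw [hftc]; ring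
        _ ≤ K := by simp only [hK]; linarith
    -- pass to the limit s → b⁻
    have hprim : ContinuousOn (fun x => ∫ t in (0:ℝ)..x, ‖G t‖) (Set.uIcc 0 b) := by
      apply intervalIntegral.continuousOn_primitive_interval
      rw [Set.uIcc_of_le hb]
      exact (hNcon.mono (fun x hx => hx.1)).integrableOn_compact isCompact_Icc
    have hbmem : b ∈ Set.uIcc (0:ℝ) b := Set.right_mem_uIcc
    have hten : Filter.Tendsto (fun x => ∫ t in (0:ℝ)..x, ‖G t‖)
        (nhdsWithin b (Set.Ico 0 b)) (nhds (∫ t in (0:ℝ)..b, ‖G t‖)) := by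
      apply (hprim b hbmem).mono
      rw [Set.uIcc_of_le hb]
      exact Set.Ico_subset_Icc_self
    have : Filter.NeBot (nhdsWithin b (Set.Ico (0:ℝ) b)) := right_nhdsWithin_Ico_neBot hb0
    apply le_of_tendsto hten
    filter_upwards [eventually_mem_nhdsWithin] with x hx
    exact inner x hx.1 hx.2
  -- global bound for every b ≥ 0
  have hbound : ∀ b : ℝ, 0 ≤ b → (∫ t in (0:ℝ)..b, ‖G t‖) ≤ K := by
    intro b hb
    set Z : Set ℝ := {t | t ∈ Set.Icc 0 b ∧ g t = 0} with hZ
    rcases Set.eq_empty_or_nonempty Z with hZe | hZne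
    · apply key b hb
      intro s hs hsb
      rcases lt_or_eq_of_le (hg_nonneg s hs) with h | h
      · exact h
      · exact absurd (Set.eq_empty_iff_forall_notMem.mp hZe s) (by
          simp only [hZ, Set.mem_setOf_eq, not_and, Set.mem_Icc]
          intro hcon
          exact (hcon ⟨hs, hsb.le⟩ h.symm).elim)
    · have hZc : IsClosed Z := by
        have : Z = Set.Icc 0 b ∩ g ⁻¹' {0} := by
          ext x; simp [hZ]
        rw [this]
        exact ContinuousOn.preimage_isClosed_of_isClosed
          (hg_cont.mono (fun x hx => hx.1)) isClosed_Icc isClosed_singleton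
      have hZbdd : BddBelow Z := ⟨0, fun x hx => hx.1.1⟩
      set T := sInf Z with hT
      have hTmem : T ∈ Z := hZc.csInf_mem hZne hZbdd
      have hT0 : 0 ≤ T := hTmem.1.1
      have hTb : T ≤ b := hTmem.1.2
      have hgT : g T = 0 := hTmem.2
      have hgz : ∀ u, T ≤ u → g u = 0 := by
        intro u hu
        have h1 : g u ≤ g T := hg_anti hTmem.1.1 (le_trans hT0 hu) hu
        have h2 : 0 ≤ g u := hg_nonneg u (le_trans hT0 hu)
        rw [hgT] at h1; linarith
      have hGz : ∀ t, T < t → G t = 0 := by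
        intro t ht
        have hconst : HasDerivAt g 0 t := by
          have hev : g =ᶠ[nhds t] fun _ => 0 := by
            filter_upwards [Ioi_mem_nhds ht] with u hu
            exact hgz u (le_of_lt hu)
          exact (hasDerivAt_const t (0:ℝ)).congr_of_eventuallyEq hev
        have := (hg_deriv t (le_trans hT0 ht.le)).unique hconst
        have hn : ‖G t‖ = 0 := by
          have h2 : ‖G t‖ ^ 2 = 0 := by linarith
          exact pow_eq_zero_iff two_ne_zero |>.mp h2
        exact norm_eq_zero.mp hn
      have hsplit : (∫ t in (0:ℝ)..b, ‖G t‖) =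
          (∫ t in (0:ℝ)..T, ‖G t‖) + ∫ t in T..b, ‖G t‖ :=
        (intervalIntegral.integral_add_adjacent_intervals
          (hGint 0 T le_rfl hT0) (hGint T b hT0 hTb)).symm
      have hzero : (∫ t in T..b, ‖G t‖) = 0 := by
        rw [intervalIntegral.integral_of_le hTb]
        have hE : Set.EqOn (fun t => ‖G t‖) 0 (Set.Ioc T b) := by
          intro t ht
          show ‖G t‖ = 0
          rw [hGz t ht.1, norm_zero]
        rw [MeasureTheory.setIntegral_congr_fun measurableSet_Ioc hE]
        simp
      have hkeyT : (∫ t in (0:ℝ)..T, ‖G t‖) ≤ K := by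
        apply key T hT0
        intro s hs hsT
        rcases lt_or_eq_of_le (hg_nonneg s hs) with h | h
        · exact h
        · exfalso
          have : s ∈ Z := ⟨⟨hs, le_trans hsT.le hTb⟩, h.symm⟩
          exact absurd (csInf_le hZbdd this) (not_le.mpr hsT)
      rw [hsplit, hzero, add_zero]
      exact hkeyT
  -- integrability on Ioi 0
  have hIoc : ∀ i : ℝ, IntegrableOn (fun t => ‖G t‖) (Set.Ioc 0 i) volume := by
    intro i
    rcases le_or_gt i 0 with h | h
    · rw [Set.Ioc_eq_empty (not_lt.mpr h)]; simp
    · exact ((hNcon.mono (fun x hx => hx.1 : Set.Icc 0 i ⊆ Set.Ici 0)).integrableOn_compact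
        isCompact_Icc).mono_set Set.Ioc_subset_Icc_self
  have hintIoi : IntegrableOn (fun t => ‖G t‖) (Set.Ioi 0) volume := by
    apply MeasureTheory.integrableOn_Ioi_of_intervalIntegral_norm_bounded K 0 hIoc
      Filter.tendsto_id
    filter_upwards [Filter.eventually_ge_atTop (0:ℝ)] with i hi
    have := hbound i hi
    simpa [norm_norm] using this
  have hlim : Filter.Tendsto (fun i => ∫ t in (0:ℝ)..i, ‖G t‖) Filter.atTop
      (nhds (∫ t in Set.Ioi (0:ℝ), ‖G t‖)) :=
    MeasureTheory.intervalIntegral_tendsto_integral_Ioi 0 hintIoi Filter.tendsto_id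
  have hIoile : (∫ t in Set.Ioi (0:ℝ), ‖G t‖) ≤ K := by
    apply le_of_tendsto hlim
    filter_upwards [Filter.eventually_ge_atTop (0:ℝ)] with i hi
    exact hbound i hi
  constructor
  · have heq : (∫ t in Set.Ioi (0:ℝ), ‖deriv w t‖) = ∫ t in Set.Ioi (0:ℝ), ‖G t‖ := by
      apply MeasureTheory.setIntegral_congr_fun measurableSet_Ioi
      intro t ht
      have := (hflow t (le_of_lt ht)).deriv
      simp only [this, norm_neg]
      rfl
    rw [heq]
    exact hIoile
  · -- convergence
    set F : ℝ → ℝ := fun i => ∫ t in (0:ℝ)..i, ‖G t‖ with hF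
    have hFc : CauchySeq F := hlim.cauchySeq
    have hdist : ∀ s t : ℝ, 0 ≤ s → s ≤ t → dist (w t) (w s) ≤ dist (F t) (F s) := by
      intro s t hs hst
      have hderivs : ∀ u ∈ Set.uIcc s t, HasDerivAt w (-(G u)) u := by
        intro u hu
        rw [Set.uIcc_of_le hst] at hu
        exact hflow u (le_trans hs hu.1)
      have hintG : IntervalIntegrable (fun u => -(G u)) volume s t := by
        apply ContinuousOn.intervalIntegrable
        apply ContinuousOn.neg
        apply hGcon.mono
        rw [Set.uIcc_of_le hst]
        exact fun x hx => le_trans hs hx.1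
      have hftc2 : (∫ u in s..t, -(G u)) = w t - w s :=
        intervalIntegral.integral_eq_sub_of_hasDerivAt hderivs hintG
      have h1 : dist (w t) (w s) = ‖∫ u in s..t, -(G u)‖ := by
        rw [hftc2, dist_eq_norm]
      have h2 : ‖∫ u in s..t, -(G u)‖ ≤ ∫ u in s..t, ‖G u‖ := by
        refine le_trans (intervalIntegral.norm_integral_le_integral_norm hst) ?_
        simp [norm_neg]
      have h3 : (∫ u in s..t, ‖G u‖) = F t - F s := by
        have := intervalIntegral.integral_add_adjacent_intervals
          (hGint 0 s le_rfl hs) (hGint s t hs hst)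
        simp only [hF]
        linarith
      rw [h1]
      refine le_trans h2 ?_
      rw [h3, Real.dist_eq]
      exact le_trans (le_abs_self _) (by rw [abs_sub_comm])
    have hwC : CauchySeq w := by
      rw [Metric.cauchySeq_iff']
      intro ε hε
      obtain ⟨N0, hN0⟩ := Metric.cauchySeq_iff'.mp hFc (ε/2) (by linarith)
      refine ⟨max N0 0, fun t ht => ?_⟩
      have hN0' : N0 ≤ max N0 0 := le_max_left _ _
      have h0N : (0:ℝ) ≤ max N0 0 := le_max_right _ _
      have h1 := hdist (max N0 0) t h0N ht
      have h2 := hN0 t (le_trans hN0' ht)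
      have h3 := hN0 (max N0 0) hN0'
      have h4 : dist (F t) (F (max N0 0)) ≤ dist (F t) (F N0) + dist (F N0) (F (max N0 0)) :=
        dist_triangle _ _ _
      rw [dist_comm (F N0)] at h4
      calc dist (w t) (w (max N0 0)) ≤ dist (F t) (F (max N0 0)) := h1
        _ ≤ dist (F t) (F N0) + dist (F (max N0 0)) (F N0) := h4
        _ < ε/2 + ε/2 := add_lt_add h2 h3
        _ = ε := by ring
    exact cauchySeq_tendsto_of_complete hwC
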